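/- On CFK^∞(11n_57), the Sarkar map σ := Id + U^{-1}(Φ∘Ψ) satisfies σ(d) = d + b, σ(j) = j + i, σ(p) = p + n, and σ(y) = y for every other generator y in {a, b, c, e, f, g, h, i, k, l, m, n, o, q}. -/
import Mathlib


/- STATEMENT 7: on CFK^∞(11n_57), the Sarkar map σ = Id + U⁻¹(Φ∘Ψ) satisfies
σ(d) = d + b, σ(j) = j + i, σ(p) = p + n, and σ(y) = y for every other
generator y ∈ {a, b, c, e, f, g, h, i, k, l, m, n, o, q}. -/

open LaurentPolynomial

noncomputable section

/-- F2[U, U⁻¹] -/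
abbrev L2 : Type := LaurentPolynomial (ZMod 2)

/-- the variable U = T 1 -/
def UL : L2 := T 1

/-- the i-th free generator -/
def gen {n : ℕ} (i : Fin n) : Fin n → L2 := Pi.single i 1

/-- the F2[U,U⁻¹]-linear map sending the i-th generator to `v i` -/
def mkL {n : ℕ} (v : Fin n → (Fin n → L2)) : (Fin n → L2) →ₗ[L2] (Fin n → L2) :=
  (Pi.basisFun L2 (Fin n)).constr ℕ v

/- generators of CFK^∞(11n_57):
   a = 0, b = 1, c = 2, d = 3, e = 4, f = 5, g = 6, h = 7, i = 8, j = 9,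
   k = 10, l = 11, m = 12, n = 13, o = 14, p = 15, q = 16 -/

/-- the differential of CFK^∞(11n_57) -/
def d : (Fin 17 → L2) →ₗ[L2] (Fin 17 → L2) :=
  mkL ![gen 1,                       -- ∂a = b
        0, 0,                        -- ∂b = ∂c = 0
        UL • gen 0 + gen 5,          -- ∂d = Ua + f
        UL • gen 2 + gen 7,          -- ∂e = Uc + h
        UL • gen 1,                  -- ∂f = Ub
        gen 8,                       -- ∂g = i
        0, 0,                        -- ∂h = ∂i = 0
        UL • gen 6 + gen 10,         -- ∂j = Ug + k
        UL • gen 8,                  -- ∂k = Ui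
        gen 13,                      -- ∂l = n
        UL ^ 2 • gen 7 + gen 14,     -- ∂m = U²h + o
        0, 0,                        -- ∂n = ∂o = 0
        UL • gen 11 + gen 16,        -- ∂p = Ul + q
        UL • gen 13]                 -- ∂q = Un

/-- Φ = Σ_{p odd} ∂_{p0}: the components of ∂ lowering the first planar
coordinate by an odd amount and preserving the second (computed from the
planar bigradings a:(0,4); b,c,d:(0,3); e,f:(0,2); g:(0,1); h,i,j:(0,0);
k:(0,-1); l,m:(0,-2); n,o,p:(0,-3); q:(0,-4)). -/
def Phi : (Fin 17 → L2) →ₗ[L2] (Fin 17 → L2) :=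
  mkL ![0, 0, 0,
        UL • gen 0,        -- Φ(d) = Ua
        UL • gen 2,        -- Φ(e) = Uc
        UL • gen 1,        -- Φ(f) = Ub
        0, 0, 0,
        UL • gen 6,        -- Φ(j) = Ug
        UL • gen 8,        -- Φ(k) = Ui
        0, 0, 0, 0,
        UL • gen 11,       -- Φ(p) = Ul
        UL • gen 13]       -- Φ(q) = Un

/-- Ψ = Σ_{q odd} ∂_{0q}: the components of ∂ preserving the first planar
coordinate and lowering the second by an odd amount. -/
def Psi : (Fin 17 → L2) →ₗ[L2] (Fin 17 → L2) :=
  mkL ![gen 1,             -- Ψ(a) = b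
        0, 0,
        gen 5,             -- Ψ(d) = f
        0, 0,
        gen 8,             -- Ψ(g) = i
        0, 0,
        gen 10,            -- Ψ(j) = k
        0,
        gen 13,            -- Ψ(l) = n
        gen 14,            -- Ψ(m) = o
        0, 0,
        gen 16,            -- Ψ(p) = q
        0]

/-- the Sarkar map σ = Id + U⁻¹(Φ ∘ Ψ) -/
def sigma : (Fin 17 → L2) →ₗ[L2] (Fin 17 → L2) :=
  LinearMap.id + (T (-1) : L2) • (Phi ∘ₗ Psi)


lemma gen_eq {n : ℕ} (i : Fin n) : (Pi.basisFun L2 (Fin n)) i = gen i := by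
  simp [gen, Pi.basisFun_apply]

lemma mkL_gen {n : ℕ} (v : Fin n → (Fin n → L2)) (i : Fin n) : mkL v (gen i) = v i := by
  rw [mkL, ← gen_eq, Module.Basis.constr_basis]

lemma TU : (T (-1) : L2) * UL = 1 := by
  rw [UL, ← T_add]; norm_num

lemma UT : UL * (T (-1) : L2) = 1 := by rw [mul_comm]; exact TU

lemma add_self' {M : Type*} [AddCommMonoid M] [Module (ZMod 2) M] (x : M) : x + x = 0 := by
  rw [← two_smul (ZMod 2) x, show (2:ZMod 2) = 0 by decide, zero_smul]

@[simp] lemma d_0 : d (gen 0) = gen 1 := (mkL_gen _ 0).trans rfl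
@[simp] lemma d_1 : d (gen 1) = 0 := (mkL_gen _ 1).trans rfl
@[simp] lemma d_2 : d (gen 2) = 0 := (mkL_gen _ 2).trans rfl
@[simp] lemma d_3 : d (gen 3) = UL • gen 0 + gen 5 := (mkL_gen _ 3).trans rfl
@[simp] lemma d_4 : d (gen 4) = UL • gen 2 + gen 7 := (mkL_gen _ 4).trans rfl
@[simp] lemma d_5 : d (gen 5) = UL • gen 1 := (mkL_gen _ 5).trans rfl
@[simp] lemma d_6 : d (gen 6) = gen 8 := (mkL_gen _ 6).trans rfl
@[simp] lemma d_7 : d (gen 7) = 0 := (mkL_gen _ 7).trans rfl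
@[simp] lemma d_8 : d (gen 8) = 0 := (mkL_gen _ 8).trans rfl
@[simp] lemma d_9 : d (gen 9) = UL • gen 6 + gen 10 := (mkL_gen _ 9).trans rfl
@[simp] lemma d_10 : d (gen 10) = UL • gen 8 := (mkL_gen _ 10).trans rfl
@[simp] lemma d_11 : d (gen 11) = gen 13 := (mkL_gen _ 11).trans rfl
@[simp] lemma d_12 : d (gen 12) = UL ^ 2 • gen 7 + gen 14 := (mkL_gen _ 12).trans rfl
@[simp] lemma d_13 : d (gen 13) = 0 := (mkL_gen _ 13).trans rfl
@[simp] lemma d_14 : d (gen 14) = 0 := (mkL_gen _ 14).trans rfl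
@[simp] lemma d_15 : d (gen 15) = UL • gen 11 + gen 16 := (mkL_gen _ 15).trans rfl
@[simp] lemma d_16 : d (gen 16) = UL • gen 13 := (mkL_gen _ 16).trans rfl
@[simp] lemma Phi_0 : Phi (gen 0) = 0 := (mkL_gen _ 0).trans rfl
@[simp] lemma Phi_1 : Phi (gen 1) = 0 := (mkL_gen _ 1).trans rfl
@[simp] lemma Phi_2 : Phi (gen 2) = 0 := (mkL_gen _ 2).trans rfl
@[simp] lemma Phi_3 : Phi (gen 3) = UL • gen 0 := (mkL_gen _ 3).trans rfl
@[simp] lemma Phi_4 : Phi (gen 4) = UL • gen 2 := (mkL_gen _ 4).trans rfl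
@[simp] lemma Phi_5 : Phi (gen 5) = UL • gen 1 := (mkL_gen _ 5).trans rfl
@[simp] lemma Phi_6 : Phi (gen 6) = 0 := (mkL_gen _ 6).trans rfl
@[simp] lemma Phi_7 : Phi (gen 7) = 0 := (mkL_gen _ 7).trans rfl
@[simp] lemma Phi_8 : Phi (gen 8) = 0 := (mkL_gen _ 8).trans rfl
@[simp] lemma Phi_9 : Phi (gen 9) = UL • gen 6 := (mkL_gen _ 9).trans rfl
@[simp] lemma Phi_10 : Phi (gen 10) = UL • gen 8 := (mkL_gen _ 10).trans rfl
@[simp] lemma Phi_11 : Phi (gen 11) = 0 := (mkL_gen _ 11).trans rfl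
@[simp] lemma Phi_12 : Phi (gen 12) = 0 := (mkL_gen _ 12).trans rfl
@[simp] lemma Phi_13 : Phi (gen 13) = 0 := (mkL_gen _ 13).trans rfl
@[simp] lemma Phi_14 : Phi (gen 14) = 0 := (mkL_gen _ 14).trans rfl
@[simp] lemma Phi_15 : Phi (gen 15) = UL • gen 11 := (mkL_gen _ 15).trans rfl
@[simp] lemma Phi_16 : Phi (gen 16) = UL • gen 13 := (mkL_gen _ 16).trans rfl
@[simp] lemma Psi_0 : Psi (gen 0) = gen 1 := (mkL_gen _ 0).trans rfl
@[simp] lemma Psi_1 : Psi (gen 1) = 0 := (mkL_gen _ 1).trans rfl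
@[simp] lemma Psi_2 : Psi (gen 2) = 0 := (mkL_gen _ 2).trans rfl
@[simp] lemma Psi_3 : Psi (gen 3) = gen 5 := (mkL_gen _ 3).trans rfl
@[simp] lemma Psi_4 : Psi (gen 4) = 0 := (mkL_gen _ 4).trans rfl
@[simp] lemma Psi_5 : Psi (gen 5) = 0 := (mkL_gen _ 5).trans rfl
@[simp] lemma Psi_6 : Psi (gen 6) = gen 8 := (mkL_gen _ 6).trans rfl
@[simp] lemma Psi_7 : Psi (gen 7) = 0 := (mkL_gen _ 7).trans rfl
@[simp] lemma Psi_8 : Psi (gen 8) = 0 := (mkL_gen _ 8).trans rfl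
@[simp] lemma Psi_9 : Psi (gen 9) = gen 10 := (mkL_gen _ 9).trans rfl
@[simp] lemma Psi_10 : Psi (gen 10) = 0 := (mkL_gen _ 10).trans rfl
@[simp] lemma Psi_11 : Psi (gen 11) = gen 13 := (mkL_gen _ 11).trans rfl
@[simp] lemma Psi_12 : Psi (gen 12) = gen 14 := (mkL_gen _ 12).trans rfl
@[simp] lemma Psi_13 : Psi (gen 13) = 0 := (mkL_gen _ 13).trans rfl
@[simp] lemma Psi_14 : Psi (gen 14) = 0 := (mkL_gen _ 14).trans rfl
@[simp] lemma Psi_15 : Psi (gen 15) = gen 16 := (mkL_gen _ 15).trans rfl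
@[simp] lemma Psi_16 : Psi (gen 16) = 0 := (mkL_gen _ 16).trans rfl

theorem stmt_7 :
    -- CFK^∞(11n_57) is a chain complex
    d ∘ₗ d = 0 ∧
    -- σ(d) = d + b, σ(j) = j + i, σ(p) = p + n
    sigma (gen 3) = gen 3 + gen 1 ∧
    sigma (gen 9) = gen 9 + gen 8 ∧
    sigma (gen 15) = gen 15 + gen 13 ∧
    -- σ(y) = y for every other generator y
    sigma (gen 0) = gen 0 ∧ sigma (gen 1) = gen 1 ∧ sigma (gen 2) = gen 2 ∧
    sigma (gen 4) = gen 4 ∧ sigma (gen 5) = gen 5 ∧ sigma (gen 6) = gen 6 ∧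
    sigma (gen 7) = gen 7 ∧ sigma (gen 8) = gen 8 ∧ sigma (gen 10) = gen 10 ∧
    sigma (gen 11) = gen 11 ∧ sigma (gen 12) = gen 12 ∧
    sigma (gen 13) = gen 13 ∧ sigma (gen 14) = gen 14 ∧
    sigma (gen 16) = gen 16 := by
  refine ⟨?_, ?_, ?_, ?_, ?_, ?_, ?_, ?_, ?_, ?_, ?_, ?_, ?_, ?_, ?_, ?_, ?_, ?_⟩
  · apply (Pi.basisFun L2 (Fin 17)).ext
    intro i
    rw [gen_eq]
    fin_cases i <;> simp [smul_smul, add_self']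
  all_goals simp [sigma, smul_smul, TU, UT, one_smul]
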